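/- Let a bicategory have bicategorical coinserters and bicategorical coinverters. Then it has bicategorical coequalizers: the bicategorical coequalizer of f, g : A ⇉ B is obtained by first forming the bicategorical coinserter (p : B → C, α : p∘f → p∘g) of f, g, and then forming the bicategorical coinverter of the 2-cell α. -/
import Mathlib


/-!
Statement 9: In a bicategory with bicategorical coinserters and bicategorical
coinverters, bicategorical coequalizers exist: the coequalizer of `f, g : a ⟶ b` is
obtained by forming the bicategorical coinserter `(p : b ⟶ c, α : f ≫ p ⟶ g ≫ p)` of
`f, g` and then the bicategorical coinverter `r : c ⟶ d` of the 2-cell `α`.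
-/

open CategoryTheory Bicategory

universe w v u

variable {B : Type u} [Bicategory.{w, v} B]

/-- `(p, α)` is a bicategorical coinserter of `f, g : a ⟶ b`. -/
def IsBicatCoinserter {a b c : B} (f g : a ⟶ b) (p : b ⟶ c) (α : f ≫ p ⟶ g ≫ p) : Prop :=
  ∀ t : B,
    (∀ (q : b ⟶ t) (β : f ≫ q ⟶ g ≫ q),
      ∃ (k : c ⟶ t) (e : p ≫ k ≅ q),
        β = f ◁ e.inv ≫ (α_ f p k).inv ≫ α ▷ k ≫ (α_ g p k).hom ≫ g ◁ e.hom) ∧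
    (∀ (k l : c ⟶ t) (θ : p ≫ k ⟶ p ≫ l),
      ((α_ f p k).inv ≫ α ▷ k ≫ (α_ g p k).hom) ≫ g ◁ θ =
        f ◁ θ ≫ ((α_ f p l).inv ≫ α ▷ l ≫ (α_ g p l).hom) →
      ∃! π : k ⟶ l, p ◁ π = θ)

/-- `p` is a bicategorical coinverter of the 2-cell `η : f ⟶ g`. -/
def IsBicatCoinverter {a b c : B} {f g : a ⟶ b} (η : f ⟶ g) (p : b ⟶ c) : Prop :=
  IsIso (η ▷ p) ∧
  ∀ t : B,
    (∀ r : b ⟶ t, IsIso (η ▷ r) → ∃ k : c ⟶ t, Nonempty (p ≫ k ≅ r)) ∧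
    (∀ (k l : c ⟶ t) (θ : p ≫ k ⟶ p ≫ l), ∃! π : k ⟶ l, p ◁ π = θ)

/-- `(p, w)` is a bicategorical coequalizer of `f, g : a ⟶ b`. -/
def IsBicatCoequalizer {a b c : B} (f g : a ⟶ b) (p : b ⟶ c) (w : f ≫ p ≅ g ≫ p) : Prop :=
  ∀ t : B,
    (∀ (q : b ⟶ t) (β : f ≫ q ≅ g ≫ q),
      ∃ (k : c ⟶ t) (e : p ≫ k ≅ q),
        β.hom = f ◁ e.inv ≫ (α_ f p k).inv ≫ w.hom ▷ k ≫ (α_ g p k).hom ≫ g ◁ e.hom) ∧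
    (∀ (k l : c ⟶ t) (θ : p ≫ k ⟶ p ≫ l),
      ((α_ f p k).inv ≫ w.hom ▷ k ≫ (α_ g p k).hom) ≫ g ◁ θ =
        f ◁ θ ≫ ((α_ f p l).inv ≫ w.hom ▷ l ≫ (α_ g p l).hom) →
      ∃! π : k ⟶ l, p ◁ π = θ)

/-- coequalizers from coinserters followed by coinverters. -/
theorem bicat_coequalizer_of_coinserter_and_coinverter
    {a b c d : B} (f g : a ⟶ b) (p : b ⟶ c) (α : f ≫ p ⟶ g ≫ p)
    (hins : IsBicatCoinserter f g p α) (r : c ⟶ d)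
    (hinv : IsBicatCoinverter α r) :
    ∃ w : f ≫ (p ≫ r) ≅ g ≫ (p ≫ r), IsBicatCoequalizer f g (p ≫ r) w := by
  haveI : IsIso (α ▷ r) := hinv.1
  refine ⟨asIso ((α_ f p r).inv ≫ α ▷ r ≫ (α_ g p r).hom), fun t => ⟨?_, ?_⟩⟩
  · intro q β
    obtain ⟨k₁, e₁, hb⟩ := (hins t).1 q β.hom
    haveI : IsIso (α ▷ k₁) := by
      have h1 : α ▷ k₁ = (α_ f p k₁).hom ≫ f ◁ e₁.hom ≫ β.hom ≫ g ◁ e₁.inv ≫ (α_ g p k₁).inv := by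
        rw [hb]; simp
      rw [h1]; infer_instance
    obtain ⟨k, ⟨φ⟩⟩ := (hinv.2 t).1 k₁ inferInstance
    refine ⟨k, α_ p r k ≪≫ whiskerLeftIso p φ ≪≫ e₁, ?_⟩
    rw [hb]
    simp only [Iso.trans_hom, Iso.trans_inv, whiskerLeftIso_hom, whiskerLeftIso_inv, asIso_hom]
    have hex : (f ≫ p) ◁ φ.hom ≫ α ▷ k₁ = α ▷ (r ≫ k) ≫ (g ≫ p) ◁ φ.hom :=
      whisker_exchange α φ.hom
    have hα : α ▷ k₁ = (f ≫ p) ◁ φ.inv ≫ α ▷ (r ≫ k) ≫ (g ≫ p) ◁ φ.hom := by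
      rw [← hex, ← Bicategory.whiskerLeft_comp_assoc, Iso.inv_hom_id, Bicategory.whiskerLeft_id, Category.id_comp]
    rw [hα]; bicategory
  · intro k l θ hθ
    simp only [asIso_hom] at hθ
    set θt : p ≫ (r ≫ k) ⟶ p ≫ (r ≫ l) := (α_ p r k).inv ≫ θ ≫ (α_ p r l).hom with hθt
    have e1 : ((α_ f p (r ≫ k)).inv ≫ α ▷ (r ≫ k) ≫ (α_ g p (r ≫ k)).hom) ≫ g ◁ θt =
        f ◁ (α_ p r k).inv ≫
          (((α_ f (p ≫ r) k).inv ≫ ((α_ f p r).inv ≫ α ▷ r ≫ (α_ g p r).hom) ▷ k ≫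
            (α_ g (p ≫ r) k).hom) ≫ g ◁ θ) ≫ g ◁ (α_ p r l).hom := by
      simp only [hθt]; bicategory
    have e2 : f ◁ θt ≫ ((α_ f p (r ≫ l)).inv ≫ α ▷ (r ≫ l) ≫ (α_ g p (r ≫ l)).hom) =
        f ◁ (α_ p r k).inv ≫
          (f ◁ θ ≫ ((α_ f (p ≫ r) l).inv ≫ ((α_ f p r).inv ≫ α ▷ r ≫ (α_ g p r).hom) ▷ l ≫
            (α_ g (p ≫ r) l).hom)) ≫ g ◁ (α_ p r l).hom := by
      simp only [hθt]; bicategory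
    have hcond : ((α_ f p (r ≫ k)).inv ≫ α ▷ (r ≫ k) ≫ (α_ g p (r ≫ k)).hom) ≫ g ◁ θt =
        f ◁ θt ≫ ((α_ f p (r ≫ l)).inv ≫ α ▷ (r ≫ l) ≫ (α_ g p (r ≫ l)).hom) := by
      rw [e1, e2, hθ]
    obtain ⟨θ', hθ'1, hθ'2⟩ := (hins t).2 (r ≫ k) (r ≫ l) θt hcond
    obtain ⟨π, hπ1, hπ2⟩ := (hinv.2 t).2 k l θ'
    refine ⟨π, ?_, ?_⟩
    · show (p ≫ r) ◁ π = θ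
      rw [Bicategory.comp_whiskerLeft, hπ1, hθ'1, hθt]; simp
    · intro π' hπ'
      refine hπ2 π' (hθ'2 (r ◁ π') ?_)
      show p ◁ (r ◁ π') = θt
      rw [hθt, ← hπ', Bicategory.comp_whiskerLeft]
      simp
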